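/- Let φ : F_n → F_{2n} be the homomorphism between free groups determined by sending the i-th generator x_i to the commutator [x_{2i}, x_{2i+1}] of two generators of F_{2n} (0-indexed, 0 ≤ i < n). If w ∈ F_n satisfies φ(w) = u^k for some u ∈ F_{2n} and some nonzero integer k, then there exists v ∈ F_n with φ(v) = u and v^k = w. -/

import Mathlib

namespace RootAux
open FreeGroup

set_option linter.unusedSectionVars false

variable {α : Type*} [DecidableEq α]

/-- inverse of a single letter -/
def inv1 (x : α × Bool) : α × Bool := (x.1, !x.2)

lemma inv1_inv1 (x : α × Bool) : inv1 (inv1 x) = x := by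
  cases x with | mk a b => simp [inv1]

lemma ne_inv1_self (x : α × Bool) : x ≠ inv1 x := by
  cases x with | mk a b => simp [inv1]

/-- a word is reduced -/
def IsRed (L : List (α × Bool)) : Prop := List.Chain' (fun a b => b ≠ inv1 a) L

/-- cyclically reduced -/
def CycRed (L : List (α × Bool)) : Prop :=
  IsRed L ∧ ∀ a ∈ L.head?, ∀ b ∈ L.getLast?, a ≠ inv1 b

lemma reduce_of_isRed : ∀ {L : List (α × Bool)}, IsRed L → reduce L = L := by
  intro L
  induction L with
  | nil => intro _; rfl
  | cons x L ih =>
    intro h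
    have hL : IsRed L := h.tail
    rw [reduce.cons, ih hL]
    cases L with
    | nil => rfl
    | cons hd tl =>
      have hne : hd ≠ inv1 x := (List.isChain_cons_cons.mp h).1
      have : ¬(x.1 = hd.1 ∧ x.2 = !hd.2) := by
        rintro ⟨h1, h2⟩
        apply hne
        cases x with | mk a b =>
        cases hd with | mk c d =>
        simp only [inv1] at *
        subst h1
        simp [h2]
      simp [this]

lemma isRed_reduce (L : List (α × Bool)) : IsRed (reduce L) := by
  induction L with
  | nil => exact List.isChain_nil
  | cons x L ih =>
    rw [reduce.cons]
    rcases h : reduce L with _ | ⟨hd, tl⟩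
    · exact List.isChain_singleton _
    · rw [h] at ih
      by_cases hc : x.1 = hd.1 ∧ x.2 = !hd.2
      · simp only [hc, if_true]
        exact ih.tail
      · simp only [hc, if_false]
        refine List.isChain_cons_cons.mpr ⟨?_, ih⟩
        intro he
        apply hc
        cases x with | mk a b =>
        cases hd with | mk c d =>
        simp only [inv1] at he
        constructor
        · exact (Prod.ext_iff.mp he).1.symm ▸ rfl
        · have := (Prod.ext_iff.mp he).2
          simp at this ⊢
          cases b <;> simp_all
      
lemma isRed_toWord (g : FreeGroup α) : IsRed g.toWord := by
  rw [← reduce_toWord]; exact isRed_reduce _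

lemma toWord_mk_of_isRed {L : List (α × Bool)} (h : IsRed L) : (mk L).toWord = L := by
  rw [toWord_mk, reduce_of_isRed h]

lemma isRed_infix {L M : List (α × Bool)} (h : IsRed L) (hm : M <:+: L) : IsRed M :=
  List.IsChain.infix h hm

lemma invRev_cons (x : α × Bool) (L : List (α × Bool)) :
    invRev (x :: L) = invRev L ++ [inv1 x] := by
  simp [invRev, inv1]

lemma invRev_nil : invRev ([] : List (α × Bool)) = [] := rfl

/-- k-fold repetition of a list -/
def repeatR {β : Type*} (R : List β) : ℕ → List β
  | 0 => []
  | k + 1 => R ++ repeatR R k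

lemma length_repeatR {β : Type*} (R : List β) : ∀ k, (repeatR R k).length = k * R.length
  | 0 => by simp [repeatR]
  | k + 1 => by simp [repeatR, length_repeatR R k]; ring

lemma map_repeatR {β γ : Type*} (f : β → γ) (R : List β) :
    ∀ k, (repeatR R k).map f = repeatR (R.map f) k
  | 0 => rfl
  | k + 1 => by rw [repeatR, repeatR, List.map_append, map_repeatR f R k]

lemma getElem?_repeatR {β : Type*} (R : List β) :
    ∀ (k j : ℕ), j < k * R.length → (repeatR R k)[j]? = R[j % R.length]?
  | 0, j, hj => by omega
  | k + 1, j, hj => by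
    rw [repeatR, List.getElem?_append]
    by_cases hjR : j < R.length
    · rw [if_pos hjR, Nat.mod_eq_of_lt hjR]
    · rw [if_neg hjR]
      have hle : R.length ≤ j := Nat.le_of_not_lt hjR
      have h2 : j - R.length < k * R.length := by
        rw [Nat.succ_mul] at hj; omega
      rw [getElem?_repeatR R k (j - R.length) h2, Nat.mod_eq_sub_mod hle]

lemma mk_repeatR (R : List (α × Bool)) : ∀ k, mk (repeatR R k) = (mk R) ^ k
  | 0 => by simp [repeatR]; rw [← one_eq_mk]
  | k + 1 => by rw [repeatR, ← mul_mk, mk_repeatR R k, pow_succ']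

lemma head?_repeatR (R : List (α × Bool)) (hR : R ≠ []) (k : ℕ) (hk : 1 ≤ k) :
    (repeatR R k).head? = R.head? := by
  cases k with
  | zero => omega
  | succ k => rw [repeatR, List.head?_append_of_ne_nil _ hR]

lemma getLast?_repeatR (R : List (α × Bool)) (hR : R ≠ []) : ∀ (k : ℕ), 1 ≤ k →
    (repeatR R k).getLast? = R.getLast?
  | 0, h => by omega
  | 1, _ => by simp [repeatR]
  | (k+2), _ => by
    rw [repeatR, List.getLast?_append, getLast?_repeatR R hR (k+1) (by omega)]
    rcases h : R.getLast? with _ | b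
    · simp [List.getLast?_eq_none_iff] at h; exact absurd h hR
    · simp
lemma repeatR_nil {β : Type*} : ∀ k, repeatR ([] : List β) k = []
  | 0 => rfl
  | k + 1 => by rw [repeatR, List.nil_append, repeatR_nil k]

lemma repeatR_succ_front {β : Type*} (R : List β) (k : ℕ) :
    repeatR R (k + 1) = R ++ repeatR R k := rfl

lemma chain'_repeatR (R : List (α × Bool)) (hc : IsRed R)
    (hcyc : ∀ a ∈ R.head?, ∀ b ∈ R.getLast?, a ≠ inv1 b) : ∀ k, IsRed (repeatR R k)
  | 0 => List.isChain_nil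
  | k + 1 => by
    rw [repeatR]
    rw [IsRed, List.Chain', List.isChain_append]
    refine ⟨hc, chain'_repeatR R hc hcyc k, ?_⟩
    intro x hx y hy
    have hRne : R ≠ [] := by rintro rfl; simp at hx
    cases k with
    | zero => simp [repeatR] at hy
    | succ k =>
      rw [head?_repeatR R hRne (k+1) (by omega)] at hy
      exact hcyc y hy x hx

lemma isRed_sandwich (P R : List (α × Bool)) (k : ℕ) (hk : 1 ≤ k)
    (h : IsRed (P ++ R ++ invRev P))
    (hcyc : ∀ a ∈ R.head?, ∀ b ∈ R.getLast?, a ≠ inv1 b) :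
    IsRed (P ++ repeatR R k ++ invRev P) := by
  rcases eq_or_ne R [] with rfl | hRne
  · rwa [repeatR_nil]
  rw [IsRed, List.Chain', List.isChain_append, List.isChain_append] at h ⊢
  obtain ⟨⟨hP, hR, hj1⟩, hinv, hj2⟩ := h
  refine ⟨⟨hP, chain'_repeatR R hR hcyc k, ?_⟩, hinv, ?_⟩
  · intro x hx y hy
    rw [head?_repeatR R hRne k hk] at hy
    exact hj1 x hx y hy
  · simp only [List.getLast?_append] at hj2
    intro x hx y hy
    rw [List.getLast?_append, getLast?_repeatR R hRne k hk] at hx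
    exact hj2 x hx y hy

lemma decomp : ∀ (N : ℕ) (Wd : List (α × Bool)), Wd.length ≤ N → IsRed Wd →
    ∃ P R, Wd = P ++ R ++ invRev P ∧ CycRed R := by
  intro N
  induction N with
  | zero =>
    intro W hlen _
    rw [Nat.le_zero, List.length_eq_zero_iff] at hlen
    exact ⟨[], [], by simp [hlen, invRev_nil], List.isChain_nil, by simp⟩
  | succ N ih =>
    intro W hlen hred
    by_cases hc : ∀ a ∈ W.head?, ∀ b ∈ W.getLast?, a ≠ inv1 b
    · exact ⟨[], W, by simp [invRev_nil], hred, hc⟩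
    push_neg at hc
    obtain ⟨a0, ha, b, hb, hab⟩ := hc
    rcases W with _ | ⟨a1, T⟩
    · simp at ha
    have hA : a1 = a0 := by simpa using ha
    rcases eq_or_ne T [] with rfl | hT
    · have hB : a1 = b := by simpa using hb
      rw [← hB, hA] at hab
      exact absurd hab (ne_inv1_self a0)
    have hbT : T.getLast hT = b := by
      rw [List.getLast?_cons, List.getLast?_eq_getLast hT] at hb
      simpa using hb
    have hTsplit : T = T.dropLast ++ [b] := by
      conv_lhs => rw [← List.dropLast_append_getLast hT]
      rw [hbT]
    set W₂ := T.dropLast with hW₂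
    have hWform : a1 :: T = [a1] ++ W₂ ++ [b] := by
      rw [hTsplit]; simp
    have hred₂ : IsRed W₂ :=
      isRed_infix hred ⟨[a1], [b], by simp [← hTsplit]⟩
    have hlen₂ : W₂.length ≤ N := by
      have h1 : T.length + 1 ≤ N + 1 := by simpa using hlen
      have h2 : W₂.length = T.length - 1 := List.length_dropLast
      omega
    obtain ⟨P', R, hW2eq, hcyc⟩ := ih W₂ hlen₂ hred₂
    refine ⟨a1 :: P', R, ?_, hcyc⟩
    rw [invRev_cons]
    have hba : b = inv1 a1 := by rw [hA, hab, inv1_inv1]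
    rw [hWform, hW2eq, hba]
    simp
lemma pow_toWord (g : FreeGroup α) (k : ℕ) (hk : 1 ≤ k) :
    ∃ P R, g.toWord = P ++ R ++ invRev P ∧ CycRed R ∧
      (g ^ k).toWord = P ++ repeatR R k ++ invRev P := by
  obtain ⟨P, R, hW, hcyc⟩ := decomp g.toWord.length g.toWord le_rfl (isRed_toWord g)
  have hred : IsRed (P ++ R ++ invRev P) := hW ▸ isRed_toWord g
  have hg : g = mk P * mk R * (mk P)⁻¹ := by
    rw [inv_mk, mul_mk, mul_mk, ← hW, mk_toWord]
  have hpow : g ^ k = mk (P ++ repeatR R k ++ invRev P) := by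
    rw [hg, conj_pow, ← mk_repeatR, inv_mk, mul_mk, mul_mk]
  exact ⟨P, R, hW, hcyc,
    by rw [hpow, toWord_mk_of_isRed (isRed_sandwich P R k hk hred hcyc.2)]⟩

lemma key (g : FreeGroup α) (L : List (α × Bool)) (hL : CycRed L) (k : ℕ) (hk : 1 ≤ k)
    (h : g ^ k = mk L) : L = repeatR g.toWord k := by
  obtain ⟨P, R, hW, _hcyc, hpowW⟩ := pow_toWord g k hk
  have hL' : (g ^ k).toWord = L := by rw [h, toWord_mk_of_isRed hL.1]
  have hEq : L = P ++ repeatR R k ++ invRev P := by rw [← hL', hpowW]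
  have hP : P = [] := by
    rcases P with _ | ⟨p, P'⟩
    · rfl
    exfalso
    have hhead : L.head? = some p := by rw [hEq]; simp
    have hlast : L.getLast? = some (inv1 p) := by
      rw [hEq, List.getLast?_append, invRev_cons, List.getLast?_append]
      simp
    exact hL.2 p (by rw [hhead]; rfl) (inv1 p) (by rw [hlast]; rfl) (by rw [inv1_inv1])
  subst hP
  rw [invRev_nil, List.append_nil, List.nil_append] at hEq hW
  rw [hW, hEq]

/-- torsion-freeness -/
lemma eq_one_of_pow_eq_one (g : FreeGroup α) (k : ℕ) (hk : 1 ≤ k) (h : g ^ k = 1) :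
    g = 1 := by
  have h1 : g ^ k = mk [] := by rw [h, one_eq_mk]
  have h2 : ([] : List (α × Bool)) = repeatR g.toWord k :=
    key g [] ⟨List.isChain_nil, by simp⟩ k hk h1
  have h3 : (repeatR g.toWord k).length = 0 := by rw [← h2]; rfl
  rw [length_repeatR] at h3
  have h4 : g.toWord = [] := by
    rw [← List.length_eq_zero_iff]
    have := Nat.mul_eq_zero.mp h3
    omega
  exact toWord_eq_nil_iff.mp h4
lemma pat_eval : ∀ r : ℕ, r < 4 →
    ([true, true, false, false][r]? = some true ↔ r < 2) := by
  intro r hr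
  interval_cases r <;> simp

lemma four_dvd (σ : List Bool) (k m : ℕ) (hk : 2 ≤ k) (hm : 1 ≤ m)
    (h : repeatR σ k = repeatR [true, true, false, false] m) :
    ∃ t, σ.length = 4 * t ∧ 1 ≤ t := by
  set d := σ.length with hd
  have hlen : k * d = m * 4 := by
    have := congrArg List.length h
    rw [length_repeatR, length_repeatR] at this
    simpa using this
  have key : ∀ j, j < k * d → σ[j % d]? = [true, true, false, false][j % 4]? := by
    intro j hj
    rw [← getElem?_repeatR σ k j hj, h,
      getElem?_repeatR _ m j (by simp only [List.length_cons, List.length_nil]; omega)]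
    norm_num
  have hd0 : d ≠ 0 := by
    intro h0
    rw [h0, Nat.mul_zero] at hlen
    omega
  have h0true : σ[0]? = some true := by
    have := key 0 (by positivity)
    rwa [Nat.zero_mod, Nat.zero_mod] at this
  rcases eq_or_ne d 1 with hd1 | hd1
  · exfalso
    have h2 := key 2 (by omega)
    rw [hd1] at h2
    norm_num at h2
    rw [h2] at h0true
    simp at h0true
  have hd2 : 2 ≤ d := by omega
  have hkey_d : d % 4 < 2 := by
    have := key d (by nlinarith)
    rw [Nat.mod_self, h0true] at this
    exact (pat_eval (d % 4) (Nat.mod_lt _ (by omega))).mp this.symm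
  have h1true : σ[1]? = some true := by
    have := key 1 (by nlinarith)
    rwa [Nat.mod_eq_of_lt hd2, Nat.mod_eq_of_lt (by omega : (1:ℕ) < 4)] at this
  have hkey_d1 : (d + 1) % 4 < 2 := by
    have hlt : d + 1 < k * d := by nlinarith
    have := key (d + 1) hlt
    have hmod : (d + 1) % d = 1 := by
      rw [Nat.add_mod_left]
      exact Nat.mod_eq_of_lt hd2
    rw [hmod, h1true] at this
    exact (pat_eval ((d + 1) % 4) (Nat.mod_lt _ (by omega))).mp this.symm
  have : d % 4 = 0 := by omega
  exact ⟨d / 4, by omega, by omega⟩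
end RootAux

open scoped commutatorElement

/-- The homomorphism `F_n → F_{2n}` sending the `i`-th generator `xᵢ` to the
commutator `⁅x_{2i}, x_{2i+1}⁆`. -/
noncomputable def phi (n : ℕ) : FreeGroup (Fin n) →* FreeGroup (Fin (2 * n)) :=
  FreeGroup.lift fun i =>
    ⁅FreeGroup.of (⟨2 * (i : ℕ), by have := i.isLt; omega⟩ : Fin (2 * n)),
     FreeGroup.of (⟨2 * (i : ℕ) + 1, by have := i.isLt; omega⟩ : Fin (2 * n))⁆

namespace RootAux
open FreeGroup

variable {n : ℕ}

def gA (n : ℕ) (i : Fin n) : Fin (2 * n) := ⟨2 * (i : ℕ), by have := i.isLt; omega⟩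
def gB (n : ℕ) (i : Fin n) : Fin (2 * n) := ⟨2 * (i : ℕ) + 1, by have := i.isLt; omega⟩

def Blk (n : ℕ) : Fin n × Bool → List (Fin (2 * n) × Bool)
  | (i, true) => [(gA n i, true), (gB n i, true), (gA n i, false), (gB n i, false)]
  | (i, false) => [(gB n i, true), (gA n i, true), (gB n i, false), (gA n i, false)]

def Bhead (n : ℕ) : Fin n × Bool → Fin (2 * n) × Bool
  | (i, true) => (gA n i, true)
  | (i, false) => (gB n i, true)

def Blast (n : ℕ) : Fin n × Bool → Fin (2 * n) × Bool
  | (i, true) => (gB n i, false)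
  | (i, false) => (gA n i, false)

def blockList (n : ℕ) : List (Fin n × Bool) → List (Fin (2 * n) × Bool)
  | [] => []
  | x :: Xs => Blk n x ++ blockList n Xs

lemma length_Blk (x : Fin n × Bool) : (Blk n x).length = 4 := by
  rcases x with ⟨i, _ | _⟩ <;> rfl

lemma Blk_ne_nil (x : Fin n × Bool) : Blk n x ≠ [] := by
  intro h
  have := congrArg List.length h
  rw [length_Blk] at this
  simp at this

lemma head?_Blk (x : Fin n × Bool) : (Blk n x).head? = some (Bhead n x) := by
  rcases x with ⟨i, _ | _⟩ <;> rfl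

lemma getLast?_Blk (x : Fin n × Bool) : (Blk n x).getLast? = some (Blast n x) := by
  rcases x with ⟨i, _ | _⟩ <;> rfl

lemma gA_ne_gB (i j : Fin n) : gA n i ≠ gB n j := by
  simp only [gA, gB, ne_eq, Fin.mk.injEq]
  omega

lemma gA_inj {i j : Fin n} (h : gA n i = gA n j) : i = j := by
  simp only [gA, Fin.mk.injEq] at h
  exact Fin.ext (by omega)

lemma gB_inj {i j : Fin n} (h : gB n i = gB n j) : i = j := by
  simp only [gB, Fin.mk.injEq] at h
  exact Fin.ext (by omega)

lemma junction {x y : Fin n × Bool} (hxy : y ≠ inv1 x) :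
    Bhead n y ≠ inv1 (Blast n x) := by
  rcases x with ⟨i, bx⟩
  rcases y with ⟨j, by'⟩
  cases bx <;> cases by' <;>
    simp only [Bhead, Blast, inv1, Bool.not_false, Bool.not_true, ne_eq, Prod.mk.injEq,
      and_true, true_and] <;> intro h
  · exact gA_ne_gB i j h.symm
  · exact hxy (by rw [gA_inj h]; rfl)
  · exact hxy (by rw [gB_inj h]; rfl)
  · exact gA_ne_gB j i h
lemma chain'_Blk (x : Fin n × Bool) : IsRed (Blk n x) := by
  rcases x with ⟨i, _ | _⟩ <;>
    refine List.isChain_cons_cons.mpr ⟨?_, List.isChain_cons_cons.mpr ⟨?_, List.isChain_cons_cons.mpr ⟨?_,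
      List.isChain_singleton _⟩⟩⟩ <;>
    simp only [inv1, gA, gB, ne_eq, Prod.mk.injEq, Fin.mk.injEq, Bool.not_true,
      Bool.not_false, not_and] <;>
    intro h <;>
    exact absurd h (by omega)

lemma head?_blockList (x : Fin n × Bool) (Xs : List (Fin n × Bool)) :
    (blockList n (x :: Xs)).head? = some (Bhead n x) := by
  rw [blockList, List.head?_append_of_ne_nil _ (Blk_ne_nil x), head?_Blk]

lemma getLast?_blockList : ∀ (Xs : List (Fin n × Bool)) (h : Xs ≠ []),
    (blockList n Xs).getLast? = some (Blast n (Xs.getLast h))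
  | [], h => absurd rfl h
  | [x], _ => by
    rw [blockList, blockList, List.append_nil, getLast?_Blk]
    rfl
  | x :: y :: Ys, _ => by
    rw [blockList, List.getLast?_append,
      getLast?_blockList (y :: Ys) (List.cons_ne_nil y Ys)]
    rw [List.getLast_cons (List.cons_ne_nil y Ys)]
    rfl

lemma isRed_blockList : ∀ {Xs : List (Fin n × Bool)}, IsRed Xs → IsRed (blockList n Xs) := by
  intro Xs
  induction Xs with
  | nil => intro _; exact List.isChain_nil
  | cons x Xs ih =>
    intro h
    rw [blockList, IsRed, List.Chain', List.isChain_append]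
    refine ⟨chain'_Blk x, ih h.tail, ?_⟩
    intro a ha y hy
    rw [getLast?_Blk] at ha
    obtain rfl : Blast n x = a := by simpa using ha
    rcases Xs with _ | ⟨z, Zs⟩
    · simp [blockList] at hy
    rw [head?_blockList] at hy
    obtain rfl : Bhead n z = y := by simpa using hy
    exact junction ((List.isChain_cons_cons.mp h).1)

lemma cycRed_blockList {Xs : List (Fin n × Bool)} (h : CycRed Xs) :
    CycRed (blockList n Xs) := by
  refine ⟨isRed_blockList h.1, ?_⟩
  rcases Xs with _ | ⟨x, Xs⟩
  · intro a ha; simp [blockList] at ha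
  intro a ha b hb
  rw [head?_blockList] at ha
  obtain rfl : Bhead n x = a := by simpa using ha
  rw [getLast?_blockList (x :: Xs) (List.cons_ne_nil x Xs)] at hb
  obtain rfl : Blast n ((x :: Xs).getLast (List.cons_ne_nil x Xs)) = b := by simpa using hb
  apply junction
  apply h.2
  · rfl
  · rw [List.getLast?_eq_getLast (List.cons_ne_nil x Xs)]
    rfl

lemma blockList_append : ∀ (X Y : List (Fin n × Bool)),
    blockList n (X ++ Y) = blockList n X ++ blockList n Y
  | [], Y => rfl
  | x :: X, Y => by
    rw [List.cons_append, blockList, blockList, blockList_append X Y, List.append_assoc]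

lemma blockList_repeatR (Vs : List (Fin n × Bool)) :
    ∀ k, blockList n (repeatR Vs k) = repeatR (blockList n Vs) k
  | 0 => rfl
  | k + 1 => by
    rw [repeatR, repeatR, blockList_append, blockList_repeatR Vs k]

lemma snd_blockList : ∀ (Xs : List (Fin n × Bool)),
    (blockList n Xs).map Prod.snd = repeatR [true, true, false, false] Xs.length
  | [] => rfl
  | x :: Xs => by
    rw [blockList, List.map_append, snd_blockList Xs, List.length_cons]
    have hB : (Blk n x).map Prod.snd = [true, true, false, false] := by
      rcases x with ⟨i, _ | _⟩ <;> rfl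
    rw [hB]
    rfl

lemma take_blockList : ∀ (Xs : List (Fin n × Bool)) (t : ℕ),
    (blockList n Xs).take (4 * t) = blockList n (Xs.take t)
  | [], t => by simp [blockList]
  | x :: Xs, 0 => by simp [blockList]
  | x :: Xs, t + 1 => by
    rw [blockList, List.take_append, length_Blk,
      List.take_of_length_le (by rw [length_Blk]; omega),
      (by omega : 4 * (t + 1) - 4 = 4 * t), take_blockList Xs t,
      List.take_succ_cons, blockList]

lemma Blk_inj {x y : Fin n × Bool} (h : Blk n x = Blk n y) : x = y := by
  rcases x with ⟨i, _ | _⟩ <;> rcases y with ⟨j, _ | _⟩ <;>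
    simp only [Blk, List.cons.injEq, Prod.mk.injEq, and_true, true_and] at h
  · rw [gB_inj h.1]
  · exact absurd h.1 (gA_ne_gB j i).symm
  · exact absurd h.1 ((gA_ne_gB i j))
  · rw [gA_inj h.1]

lemma blockList_inj : ∀ {X Y : List (Fin n × Bool)}, blockList n X = blockList n Y → X = Y
  | [], [], _ => rfl
  | [], y :: Y, h => by
    exfalso
    have := congrArg List.length h
    simp only [blockList, List.length_nil, List.length_append, length_Blk] at this
    omega
  | x :: X, [], h => by
    exfalso
    have := congrArg List.length h
    simp only [blockList, List.length_nil, List.length_append, length_Blk] at this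
    omega
  | x :: X, y :: Y, h => by
    rw [blockList, blockList] at h
    obtain ⟨h1, h2⟩ := List.append_inj h (by rw [length_Blk, length_Blk])
    rw [Blk_inj h1, blockList_inj h2]

lemma phi_mk : ∀ (Xs : List (Fin n × Bool)), phi n (mk Xs) = mk (blockList n Xs)
  | [] => by rw [← one_eq_mk, _root_.map_one, blockList, ← one_eq_mk]
  | x :: Xs => by
    have hsplit : mk (x :: Xs) = mk [x] * mk Xs := by rw [mul_mk]; rfl
    rw [hsplit, _root_.map_mul, phi_mk Xs, blockList, ← mul_mk]
    congr 1
    rcases x with ⟨i, _ | _⟩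
    · have h1 : mk [((i : Fin n), false)] = (FreeGroup.of i)⁻¹ := by
        have h0 : (FreeGroup.of i : FreeGroup (Fin n))⁻¹ = mk (invRev [(i, true)]) := inv_mk
        rw [h0]
        rfl
      rw [h1, _root_.map_inv]
      have h2 : phi n (FreeGroup.of i) = ⁅FreeGroup.of (gA n i), FreeGroup.of (gB n i)⁆ :=
        FreeGroup.lift_apply_of
      rw [h2, commutatorElement_def, mul_inv_rev, mul_inv_rev, mul_inv_rev, inv_inv, inv_inv]
      have ha : FreeGroup.of (gA n i) = mk [(gA n i, true)] := rfl
      have hb : FreeGroup.of (gB n i) = mk [(gB n i, true)] := rfl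
      rw [ha, hb, inv_mk, inv_mk]
      rw [mul_mk, mul_mk, mul_mk]
      rfl
    · have h1 : mk [((i : Fin n), true)] = FreeGroup.of i := rfl
      rw [h1]
      have h2 : phi n (FreeGroup.of i) = ⁅FreeGroup.of (gA n i), FreeGroup.of (gB n i)⁆ :=
        FreeGroup.lift_apply_of
      rw [h2, commutatorElement_def]
      have ha : FreeGroup.of (gA n i) = mk [(gA n i, true)] := rfl
      have hb : FreeGroup.of (gB n i) = mk [(gB n i, true)] := rfl
      rw [ha, hb, inv_mk, inv_mk]
      rw [mul_mk, mul_mk, mul_mk]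
      rfl
lemma main_aux (n : ℕ) (k : ℕ) (hk : 1 ≤ k) (w : FreeGroup (Fin n))
    (u : FreeGroup (Fin (2 * n))) (h : phi n w = u ^ k) :
    ∃ v : FreeGroup (Fin n), phi n v = u ∧ v ^ k = w := by
  rcases eq_or_lt_of_le hk with hk1 | hk2
  · exact ⟨w, by rw [h, ← hk1, pow_one], by rw [← hk1, pow_one]⟩
  have hk2' : 2 ≤ k := hk2
  obtain ⟨P, Rw, hW, hcyc⟩ := decomp w.toWord.length w.toWord le_rfl (isRed_toWord w)
  set p : FreeGroup (Fin n) := mk P with hp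
  set w' : FreeGroup (Fin n) := mk Rw with hw'
  have hwfact : w = p * w' * p⁻¹ := by
    rw [hp, hw', inv_mk, mul_mk, mul_mk, ← hW, mk_toWord]
  set u' : FreeGroup (Fin (2 * n)) := (phi n p)⁻¹ * u * (phi n p) with hu'
  have hconj : u' ^ k = (phi n p)⁻¹ * u ^ k * phi n p :=
    calc u' ^ k = ((phi n p)⁻¹ * u * ((phi n p)⁻¹)⁻¹) ^ k := by rw [inv_inv]
      _ = (phi n p)⁻¹ * u ^ k * ((phi n p)⁻¹)⁻¹ := conj_pow
      _ = (phi n p)⁻¹ * u ^ k * phi n p := by rw [inv_inv]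
  have h1 : phi n w = phi n p * phi n w' * (phi n p)⁻¹ := by
    rw [hwfact, _root_.map_mul, _root_.map_mul, _root_.map_inv]
  have hphiw' : phi n w' = u' ^ k := by
    rw [hconj, ← h, h1]
    group
  have hblocks : phi n w' = mk (blockList n Rw) := by rw [hw']; exact phi_mk Rw
  have hLcyc : CycRed (blockList n Rw) := cycRed_blockList hcyc
  have hrep : blockList n Rw = repeatR u'.toWord k :=
    key u' _ hLcyc k hk (by rw [← hphiw']; exact hblocks)
  rcases eq_or_ne Rw [] with hRnil | hRne
  · have hL : blockList n Rw = [] := by rw [hRnil]; rfl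
    have hlen0 : k * u'.toWord.length = 0 := by
      rw [← length_repeatR, ← hrep, hL]
      rfl
    have hu'1 : u' = 1 := by
      rw [← toWord_eq_nil_iff, ← List.length_eq_zero_iff]
      rcases Nat.mul_eq_zero.mp hlen0 with h0 | h0 <;> omega
    have hu1 : u = 1 := by
      have hufact : u = phi n p * u' * (phi n p)⁻¹ := by rw [hu']; group
      rw [hufact, hu'1]
      group
    have hw1 : w = 1 := by
      rw [hwfact, hw', hRnil, ← one_eq_mk]
      group
    exact ⟨1, by rw [_root_.map_one, hu1], by rw [one_pow, hw1]⟩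
  · have hm : 1 ≤ Rw.length := by
      have := List.length_eq_zero_iff (l := Rw)
      rcases Nat.eq_zero_or_pos Rw.length with h0 | h0
      · exact absurd (this.mp h0) hRne
      · exact h0
    have hsnd : repeatR (u'.toWord.map Prod.snd) k = repeatR [true, true, false, false] Rw.length := by
      rw [← map_repeatR, ← hrep, snd_blockList]
    obtain ⟨t, hd4, ht1⟩ := four_dvd _ k Rw.length hk2' hm hsnd
    have hdlen : u'.toWord.length = 4 * t := by
      rw [List.length_map] at hd4
      exact hd4
    have htake : u'.toWord = blockList n (Rw.take t) := by
      have h1' : u'.toWord = (blockList n Rw).take u'.toWord.length := by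
        rw [hrep]
        cases k with
        | zero => omega
        | succ k' => rw [repeatR_succ_front, List.take_left]
      rw [h1', hdlen, take_blockList]
    have hRw : Rw = repeatR (Rw.take t) k := by
      apply blockList_inj
      rw [blockList_repeatR, ← htake, hrep]
    refine ⟨p * mk (Rw.take t) * p⁻¹, ?_, ?_⟩
    · rw [_root_.map_mul, _root_.map_mul, _root_.map_inv]
      have : phi n (mk (Rw.take t)) = u' := by
        rw [phi_mk, ← htake, mk_toWord]
      rw [this, hu']
      group
    · rw [conj_pow, ← mk_repeatR, ← hRw, ← hw', ← hwfact]

end RootAux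

/-- If `φ w = u ^ k` for some `k ≠ 0`, then there is `v` with `φ v = u` and `v ^ k = w`. -/
theorem exists_root_preimage (n : ℕ) (w : FreeGroup (Fin n))
    (u : FreeGroup (Fin (2 * n))) (k : ℤ) (hk : k ≠ 0)
    (h : phi n w = u ^ k) :
    ∃ v : FreeGroup (Fin n), phi n v = u ∧ v ^ k = w := by
  rcases lt_trichotomy k 0 with hneg | hzero | hpos
  · have hk' : 1 ≤ (-k).toNat := by omega
    have hzp : u ^ k = u⁻¹ ^ (-k).toNat := by
      rw [← zpow_natCast, Int.toNat_of_nonneg (by omega), inv_zpow', neg_neg]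
    obtain ⟨v, hv1, hv2⟩ := RootAux.main_aux n (-k).toNat hk' w u⁻¹ (by rw [h, hzp])
    refine ⟨v⁻¹, by rw [_root_.map_inv, hv1, inv_inv], ?_⟩
    rw [inv_zpow', ← hv2, ← zpow_natCast, Int.toNat_of_nonneg (by omega)]
  · exact absurd hzero hk
  · obtain ⟨v, hv1, hv2⟩ := RootAux.main_aux n k.toNat (by omega) w u
      (by rw [h, ← zpow_natCast, Int.toNat_of_nonneg (by omega)])
    exact ⟨v, hv1, by rw [← hv2, ← zpow_natCast, Int.toNat_of_nonneg (by omega)]⟩
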